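/- Let A = (ℤ_2)^k with k ≥ 2, and T = C(h₁, h₂, h₃) a caterpillar with three spine vertices of order 2^k. Then T has an A-rainbow labeling if and only if h₁ and h₃ are even and h₂ is odd. -/

import Mathlib

/-- Edge-label function of the caterpillar `C(h₁,h₂,h₃)` induced by a vertex labeling `f`.
The vertices are the three spine vertices (`Fin 3`) together with the pendant leaves;
the edges are the two spine edges (`Fin 2`) together with the pendant edges. -/
def catLabel {A : Type*} [AddCommGroup A] {h₁ h₂ h₃ : ℕ}
    (f : Fin 3 ⊕ (Fin h₁ ⊕ Fin h₂ ⊕ Fin h₃) → A) :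
    Fin 2 ⊕ (Fin h₁ ⊕ Fin h₂ ⊕ Fin h₃) → A
  | .inl i => f (.inl i.castSucc) + f (.inl i.succ)
  | .inr (.inl j) => f (.inl 0) + f (.inr (.inl j))
  | .inr (.inr (.inl j)) => f (.inl 1) + f (.inr (.inr (.inl j)))
  | .inr (.inr (.inr j)) => f (.inl 2) + f (.inr (.inr (.inr j)))

/-- The caterpillar `C(h₁,h₂,h₃)` has an `A`-rainbow labeling: a bijective vertex
labeling by the elements of `A` whose induced edge labels are pairwise distinct. -/
def IsRainbowCat (h₁ h₂ h₃ : ℕ) (A : Type*) [AddCommGroup A] : Prop :=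
  ∃ f : Fin 3 ⊕ (Fin h₁ ⊕ Fin h₂ ⊕ Fin h₃) → A,
    Function.Bijective f ∧ Function.Injective (catLabel f)

/-! ### Generalities about `(ZMod 2)^k` -/

lemma zmod2_self (a : ZMod 2) : a + a = 0 := by fin_cases a <;> rfl

lemma zmod2_add_one (a : ZMod 2) : a + 1 ≠ a := by revert a; decide

lemma char2 {k : ℕ} (x : Fin k → ZMod 2) : x + x = 0 := by
  funext i; exact zmod2_self (x i)

lemma char2' {k : ℕ} {x y : Fin k → ZMod 2} (h : x + y = 0) : x = y := by
  have := congrArg (· + y) h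
  simpa [add_assoc, char2 y] using this

lemma sum_univ_zero (k : ℕ) (hk : 2 ≤ k) : ∑ v : Fin k → ZMod 2, v = 0 := by
  funext i
  rw [Finset.sum_apply]
  have hjlt : (if (i:ℕ) = 0 then 1 else 0) < k := by split_ifs <;> omega
  set j : Fin k := ⟨if (i:ℕ) = 0 then 1 else 0, hjlt⟩ with hjdef
  have hji : i ≠ j := by
    apply Fin.ne_of_val_ne
    simp only [hjdef]
    split_ifs with h <;> omega
  rw [Pi.zero_apply]
  apply Finset.sum_ninvolution (g := fun v => Function.update v j (v j + 1))
  · intro a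
    rw [Function.update_of_ne hji]
    exact zmod2_self _
  · intro a _ hcon
    have := congrFun hcon j
    rw [Function.update_self] at this
    exact zmod2_add_one _ this
  · intro a; exact Finset.mem_univ _
  · intro a
    funext x
    by_cases hx : x = j
    · subst hx; simp [zmod2_self, add_assoc]
    · simp [Function.update_of_ne hx]

lemma nsmul_mod {k : ℕ} (n : ℕ) (x : Fin k → ZMod 2) : n • x = (n % 2) • x := by
  conv_lhs => rw [← Nat.div_add_mod n 2]
  rw [add_nsmul, ← smul_smul, two_nsmul, char2, zero_add]

/-! ### Binary digits map `ψ : ℕ → (Fin k → ZMod 2)` -/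

def psi (k n : ℕ) : Fin k → ZMod 2 := fun i => ((n / 2^(i:ℕ)) % 2 : ℕ)

lemma psi_zero (k : ℕ) : psi k 0 = 0 := by
  funext i; simp [psi]

lemma cast01 {a b : ℕ} (ha : a < 2) (hb : b < 2) (h : (a : ZMod 2) = b) : a = b := by
  interval_cases a <;> interval_cases b <;> simp_all

lemma psi_injOn {k n m : ℕ} (hn : n < 2^k) (hm : m < 2^k) (h : psi k n = psi k m) : n = m := by
  apply Nat.eq_of_testBit_eq
  intro i
  by_cases hik : i < k
  · have := congrFun h ⟨i, hik⟩
    simp only [psi] at this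
    rw [Nat.testBit_eq_decide_div_mod_eq, Nat.testBit_eq_decide_div_mod_eq]
    have := cast01 (Nat.mod_lt _ (by norm_num)) (Nat.mod_lt _ (by norm_num)) this
    simp [this]
  · have h2 : 2^k ≤ 2^i := Nat.pow_le_pow_right (by norm_num) (by omega)
    rw [Nat.testBit_lt_two_pow (by omega), Nat.testBit_lt_two_pow (by omega)]

lemma div_pow_succ (n j : ℕ) : n / 2^(j+1) = n / 2 / 2^j := by
  rw [Nat.div_div_eq_div_mul, pow_succ, mul_comm]

lemma div_pow_succ2 (n j : ℕ) : n / 2^(j+2) = n / 4 / 2^j := by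
  rw [Nat.div_div_eq_div_mul, pow_add, mul_comm]; norm_num

lemma psi_one_add (k n : ℕ) : psi k 1 + psi k n = psi k (if n % 2 = 0 then n + 1 else n - 1) := by
  funext i
  simp only [psi, Pi.add_apply]
  rcases Nat.eq_zero_or_pos (i : ℕ) with h0 | hpos
  · rw [h0]
    simp only [pow_zero, Nat.div_one]
    rcases Nat.mod_two_eq_zero_or_one n with h | h
    · rw [if_pos h, h, show (n+1) % 2 = 1 by omega]; decide
    · rw [if_neg (by omega), h, show (n-1) % 2 = 0 by omega]; decide
  · obtain ⟨j, hj⟩ : ∃ j, (i:ℕ) = j + 1 := ⟨(i:ℕ)-1, by omega⟩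
    rw [hj, div_pow_succ, div_pow_succ, div_pow_succ]
    rw [show (1:ℕ)/2 = 0 from rfl]
    split_ifs with h
    · rw [show (n+1)/2 = n/2 by omega]; simp
    · rw [show (n-1)/2 = n/2 by omega]; simp

lemma psi_two_add (k n : ℕ) : psi k 2 + psi k n = psi k (if n / 2 % 2 = 0 then n + 2 else n - 2) := by
  funext i
  simp only [psi, Pi.add_apply]
  rcases Nat.lt_or_ge (i:ℕ) 2 with h2 | h2
  · have h01 : (i:ℕ) = 0 ∨ (i:ℕ) = 1 := by omega
    rcases h01 with h | h <;> rw [h]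
    · simp only [pow_zero, Nat.div_one]
      split_ifs with hh
      · rw [show (n+2) % 2 = n % 2 by omega]; simp
      · rw [show (n-2) % 2 = n % 2 by omega]; simp
    · rw [show (2:ℕ)/2^1 % 2 = 1 from rfl]
      split_ifs with hh
      · rw [show (n+2)/2^1 % 2 = 1 by omega, show n/2^1 % 2 = 0 by omega]; decide
      · rw [show (n-2)/2^1 % 2 = 0 by omega, show n/2^1 % 2 = 1 by omega]; decide
  · obtain ⟨j, hj⟩ : ∃ j, (i:ℕ) = j + 2 := ⟨(i:ℕ)-2, by omega⟩
    rw [hj, div_pow_succ2, div_pow_succ2, div_pow_succ2]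
    rw [show (2:ℕ)/4 = 0 from rfl]
    split_ifs with h
    · rw [show (n+2)/4 = n/4 by omega]; simp
    · rw [show (n-2)/4 = n/4 by omega]; simp

/-! ### The numeric labeling scheme -/

/-- spine vertex numbers -/
def NS (i : ℕ) : ℕ := if i = 0 then 1 else if i = 1 then 0 else 2

/-- spine edge label numbers -/
def MS (i : ℕ) : ℕ := if i = 0 then 1 else 2

/-- leaf-of-v1 vertex numbers -/
def N1 (p P R i : ℕ) : ℕ :=
  if i < 4*p then 4 + i
  else 4*(p+P) + 4 + (if R = 1 then 3*(i-4*p) else (i-4*p))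

/-- labels of leaf1 edges: flip bit 0 of N1 -/
def M1 (p P R i : ℕ) : ℕ :=
  if i < 4*p then (if i % 2 = 0 then 5 + i else 3 + i)
  else 4*(p+P) + 4 + (if R = 1 then (if i = 4*p then 1 else 2) else (1 - (i-4*p)))

/-- leaf-of-v3 vertex numbers -/
def N3 (p P r i : ℕ) : ℕ :=
  if i < 4*P then 4*p + 4 + i
  else 4*(p+P) + 4 + (if r = 1 then (if i = 4*P then 1 else 2) else 2*(i - 4*P))

/-- labels of leaf3 edges: flip bit 1 of N3 -/
def M3 (p P r i : ℕ) : ℕ :=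
  if i < 4*P then (if i % 4 < 2 then 4*p + 6 + i else 4*p + 2 + i)
  else 4*(p+P) + 4 + (if r = 1 then (if i = 4*P then 3 else 0) else (2 - 2*(i-4*P)))

/-- leaf-of-v2 vertex numbers (equal to their own labels) -/
def N2 (p P r e u i : ℕ) : ℕ :=
  if i = 0 then 3
  else if i < 1 + 2*e then 4*(p+P) + 4 + (if r = 1 then 1 + i else 2*i - 1)
  else 4*u + 4 + (i - 1 - 2*e)

lemma M1_eq (p P R r i : ℕ) (hr : r ≤ 1) (hi : i < 4*p + 2*r) :
    (if N1 p P R i % 2 = 0 then N1 p P R i + 1 else N1 p P R i - 1) = M1 p P R i := by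
  unfold N1 M1
  split_ifs <;> omega

lemma M3_eq (p P r R i : ℕ) (hR : R ≤ 1) (hi : i < 4*P + 2*R) :
    (if N3 p P r i / 2 % 2 = 0 then N3 p P r i + 2 else N3 p P r i - 2) = M3 p P r i := by
  unfold N3 M3
  split_ifs <;> omega

section Pairwise

variable {p P r R e u m h₁ h₂ h₃ : ℕ}
  (hr : r ≤ 1) (hR : R ≤ 1) (he : e = (r + R) % 2) (hu : u = p + P + (r + R + 1)/2)
  (hum : u ≤ m) (hh1 : h₁ = 4*p + 2*r) (hh2 : h₂ = 1 + 2*e + 4*(m-u)) (hh3 : h₃ = 4*P + 2*R)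

include hr hR he hu hum hh1 hh2 hh3

lemma pw_ns_ns {i j : ℕ} (hi : i < 3) (hj : j < 3) (h : NS i = NS j) : i = j := by
  unfold NS at h; revert h; split_ifs <;> intro h <;> first | exact h.elim | omega
lemma pw_ns_n1 {i j : ℕ} (hi : i < 3) (hj : j < h₁) (h : NS i = N1 p P R j) : False := by
  unfold NS N1 at h; revert h; split_ifs <;> intro h <;> first | exact h.elim | omega
lemma pw_ns_n2 {i j : ℕ} (hi : i < 3) (hj : j < h₂) (h : NS i = N2 p P r e u j) : False := by
  unfold NS N2 at h; revert h; split_ifs <;> intro h <;> first | exact h.elim | omega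
lemma pw_ns_n3 {i j : ℕ} (hi : i < 3) (hj : j < h₃) (h : NS i = N3 p P r j) : False := by
  unfold NS N3 at h; revert h; split_ifs <;> intro h <;> first | exact h.elim | omega
lemma pw_n1_n1 {i j : ℕ} (hi : i < h₁) (hj : j < h₁) (h : N1 p P R i = N1 p P R j) : i = j := by
  unfold N1 at h; revert h; split_ifs <;> intro h <;> first | exact h.elim | omega
lemma pw_n1_n2 {i j : ℕ} (hi : i < h₁) (hj : j < h₂) (h : N1 p P R i = N2 p P r e u j) : False := by
  unfold N1 N2 at h; revert h; split_ifs <;> intro h <;> first | exact h.elim | omega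
lemma pw_n1_n3 {i j : ℕ} (hi : i < h₁) (hj : j < h₃) (h : N1 p P R i = N3 p P r j) : False := by
  unfold N1 N3 at h; revert h; split_ifs <;> intro h <;> first | exact h.elim | omega
lemma pw_n2_n2 {i j : ℕ} (hi : i < h₂) (hj : j < h₂) (h : N2 p P r e u i = N2 p P r e u j) : i = j := by
  unfold N2 at h; revert h; split_ifs <;> intro h <;> first | exact h.elim | omega
lemma pw_n2_n3 {i j : ℕ} (hi : i < h₂) (hj : j < h₃) (h : N2 p P r e u i = N3 p P r j) : False := by
  unfold N2 N3 at h; revert h; split_ifs <;> intro h <;> first | exact h.elim | omega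
lemma pw_n3_n3 {i j : ℕ} (hi : i < h₃) (hj : j < h₃) (h : N3 p P r i = N3 p P r j) : i = j := by
  unfold N3 at h; revert h; split_ifs <;> intro h <;> first | exact h.elim | omega

lemma pw_ms_ms {i j : ℕ} (hi : i < 2) (hj : j < 2) (h : MS i = MS j) : i = j := by
  unfold MS at h; revert h; split_ifs <;> intro h <;> first | exact h.elim | omega
lemma pw_ms_m1 {i j : ℕ} (hi : i < 2) (hj : j < h₁) (h : MS i = M1 p P R j) : False := by
  unfold MS M1 at h; revert h; split_ifs <;> intro h <;> first | exact h.elim | omega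
lemma pw_ms_n2 {i j : ℕ} (hi : i < 2) (hj : j < h₂) (h : MS i = N2 p P r e u j) : False := by
  unfold MS N2 at h; revert h; split_ifs <;> intro h <;> first | exact h.elim | omega
lemma pw_ms_m3 {i j : ℕ} (hi : i < 2) (hj : j < h₃) (h : MS i = M3 p P r j) : False := by
  unfold MS M3 at h; revert h; split_ifs <;> intro h <;> first | exact h.elim | omega
lemma pw_m1_m1 {i j : ℕ} (hi : i < h₁) (hj : j < h₁) (h : M1 p P R i = M1 p P R j) : i = j := by
  unfold M1 at h; revert h; split_ifs <;> intro h <;> first | exact h.elim | omega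
lemma pw_m1_n2 {i j : ℕ} (hi : i < h₁) (hj : j < h₂) (h : M1 p P R i = N2 p P r e u j) : False := by
  unfold M1 N2 at h; revert h; split_ifs <;> intro h <;> first | exact h.elim | omega
lemma pw_m1_m3 {i j : ℕ} (hi : i < h₁) (hj : j < h₃) (h : M1 p P R i = M3 p P r j) : False := by
  unfold M1 M3 at h; revert h; split_ifs <;> intro h <;> first | exact h.elim | omega
lemma pw_n2_m3 {i j : ℕ} (hi : i < h₂) (hj : j < h₃) (h : N2 p P r e u i = M3 p P r j) : False := by
  unfold N2 M3 at h; revert h; split_ifs <;> intro h <;> first | exact h.elim | omega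
lemma pw_m3_m3 {i j : ℕ} (hi : i < h₃) (hj : j < h₃) (h : M3 p P r i = M3 p P r j) : i = j := by
  unfold M3 at h; revert h; split_ifs <;> intro h <;> first | exact h.elim | omega

lemma ns_lt {i : ℕ} (hi : i < 3) : NS i < 4*(m+1) := by
  unfold NS; split_ifs <;> omega
lemma ms_lt {i : ℕ} (hi : i < 2) : MS i < 4*(m+1) := by
  unfold MS; split_ifs <;> omega
lemma n1_lt {i : ℕ} (hi : i < h₁) : N1 p P R i < 4*(m+1) := by
  unfold N1; split_ifs <;> omega
lemma m1_lt {i : ℕ} (hi : i < h₁) : M1 p P R i < 4*(m+1) := by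
  unfold M1; split_ifs <;> omega
lemma n2_lt {i : ℕ} (hi : i < h₂) : N2 p P r e u i < 4*(m+1) := by
  unfold N2; split_ifs <;> omega
lemma n3_lt {i : ℕ} (hi : i < h₃) : N3 p P r i < 4*(m+1) := by
  unfold N3; split_ifs <;> omega
lemma m3_lt {i : ℕ} (hi : i < h₃) : M3 p P r i < 4*(m+1) := by
  unfold M3; split_ifs <;> omega

end Pairwise

/-! ### Combined numeric maps -/

def NF (p P r R e u : ℕ) {h₁ h₂ h₃ : ℕ} : Fin 3 ⊕ (Fin h₁ ⊕ Fin h₂ ⊕ Fin h₃) → ℕ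
  | .inl i => NS i.val
  | .inr (.inl i) => N1 p P R i.val
  | .inr (.inr (.inl i)) => N2 p P r e u i.val
  | .inr (.inr (.inr i)) => N3 p P r i.val

def MF (p P r R e u : ℕ) {h₁ h₂ h₃ : ℕ} : Fin 2 ⊕ (Fin h₁ ⊕ Fin h₂ ⊕ Fin h₃) → ℕ
  | .inl i => MS i.val
  | .inr (.inl i) => M1 p P R i.val
  | .inr (.inr (.inl i)) => N2 p P r e u i.val
  | .inr (.inr (.inr i)) => M3 p P r i.val

section Main

variable {p P r R e u m h₁ h₂ h₃ : ℕ}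
  (hr : r ≤ 1) (hR : R ≤ 1) (he : e = (r + R) % 2) (hu : u = p + P + (r + R + 1)/2)
  (hum : u ≤ m) (hh1 : h₁ = 4*p + 2*r) (hh2 : h₂ = 1 + 2*e + 4*(m-u)) (hh3 : h₃ = 4*P + 2*R)

include hr hR he hu hum hh1 hh2 hh3

lemma NF_inj : ∀ x y : Fin 3 ⊕ (Fin h₁ ⊕ Fin h₂ ⊕ Fin h₃),
    NF p P r R e u x = NF p P r R e u y → x = y := by
  rintro (i | i | i | i) (j | j | j | j) h <;> simp only [NF] at h
  · exact congrArg Sum.inl (Fin.ext (pw_ns_ns hr hR he hu hum hh1 hh2 hh3 i.isLt j.isLt h))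
  · exact (pw_ns_n1 hr hR he hu hum hh1 hh2 hh3 i.isLt j.isLt h).elim
  · exact (pw_ns_n2 hr hR he hu hum hh1 hh2 hh3 i.isLt j.isLt h).elim
  · exact (pw_ns_n3 hr hR he hu hum hh1 hh2 hh3 i.isLt j.isLt h).elim
  · exact (pw_ns_n1 hr hR he hu hum hh1 hh2 hh3 j.isLt i.isLt h.symm).elim
  · exact congrArg (fun t => Sum.inr (Sum.inl t))
      (Fin.ext (pw_n1_n1 hr hR he hu hum hh1 hh2 hh3 i.isLt j.isLt h))
  · exact (pw_n1_n2 hr hR he hu hum hh1 hh2 hh3 i.isLt j.isLt h).elim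
  · exact (pw_n1_n3 hr hR he hu hum hh1 hh2 hh3 i.isLt j.isLt h).elim
  · exact (pw_ns_n2 hr hR he hu hum hh1 hh2 hh3 j.isLt i.isLt h.symm).elim
  · exact (pw_n1_n2 hr hR he hu hum hh1 hh2 hh3 j.isLt i.isLt h.symm).elim
  · exact congrArg (fun t => Sum.inr (Sum.inr (Sum.inl t)))
      (Fin.ext (pw_n2_n2 hr hR he hu hum hh1 hh2 hh3 i.isLt j.isLt h))
  · exact (pw_n2_n3 hr hR he hu hum hh1 hh2 hh3 i.isLt j.isLt h).elim
  · exact (pw_ns_n3 hr hR he hu hum hh1 hh2 hh3 j.isLt i.isLt h.symm).elim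
  · exact (pw_n1_n3 hr hR he hu hum hh1 hh2 hh3 j.isLt i.isLt h.symm).elim
  · exact (pw_n2_n3 hr hR he hu hum hh1 hh2 hh3 j.isLt i.isLt h.symm).elim
  · exact congrArg (fun t => Sum.inr (Sum.inr (Sum.inr t)))
      (Fin.ext (pw_n3_n3 hr hR he hu hum hh1 hh2 hh3 i.isLt j.isLt h))

lemma MF_inj : ∀ x y : Fin 2 ⊕ (Fin h₁ ⊕ Fin h₂ ⊕ Fin h₃),
    MF p P r R e u x = MF p P r R e u y → x = y := by
  rintro (i | i | i | i) (j | j | j | j) h <;> simp only [MF] at h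
  · exact congrArg Sum.inl (Fin.ext (pw_ms_ms hr hR he hu hum hh1 hh2 hh3 i.isLt j.isLt h))
  · exact (pw_ms_m1 hr hR he hu hum hh1 hh2 hh3 i.isLt j.isLt h).elim
  · exact (pw_ms_n2 hr hR he hu hum hh1 hh2 hh3 i.isLt j.isLt h).elim
  · exact (pw_ms_m3 hr hR he hu hum hh1 hh2 hh3 i.isLt j.isLt h).elim
  · exact (pw_ms_m1 hr hR he hu hum hh1 hh2 hh3 j.isLt i.isLt h.symm).elim
  · exact congrArg (fun t => Sum.inr (Sum.inl t))
      (Fin.ext (pw_m1_m1 hr hR he hu hum hh1 hh2 hh3 i.isLt j.isLt h))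
  · exact (pw_m1_n2 hr hR he hu hum hh1 hh2 hh3 i.isLt j.isLt h).elim
  · exact (pw_m1_m3 hr hR he hu hum hh1 hh2 hh3 i.isLt j.isLt h).elim
  · exact (pw_ms_n2 hr hR he hu hum hh1 hh2 hh3 j.isLt i.isLt h.symm).elim
  · exact (pw_m1_n2 hr hR he hu hum hh1 hh2 hh3 j.isLt i.isLt h.symm).elim
  · exact congrArg (fun t => Sum.inr (Sum.inr (Sum.inl t)))
      (Fin.ext (pw_n2_n2 hr hR he hu hum hh1 hh2 hh3 i.isLt j.isLt h))
  · exact (pw_n2_m3 hr hR he hu hum hh1 hh2 hh3 i.isLt j.isLt h).elim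
  · exact (pw_ms_m3 hr hR he hu hum hh1 hh2 hh3 j.isLt i.isLt h.symm).elim
  · exact (pw_m1_m3 hr hR he hu hum hh1 hh2 hh3 j.isLt i.isLt h.symm).elim
  · exact (pw_n2_m3 hr hR he hu hum hh1 hh2 hh3 j.isLt i.isLt h.symm).elim
  · exact congrArg (fun t => Sum.inr (Sum.inr (Sum.inr t)))
      (Fin.ext (pw_m3_m3 hr hR he hu hum hh1 hh2 hh3 i.isLt j.isLt h))

lemma NF_lt : ∀ x : Fin 3 ⊕ (Fin h₁ ⊕ Fin h₂ ⊕ Fin h₃), NF p P r R e u x < 4*(m+1) := by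
  rintro (i | i | i | i) <;> simp only [NF]
  · exact ns_lt hr hR he hu hum hh1 hh2 hh3 i.isLt
  · exact n1_lt hr hR he hu hum hh1 hh2 hh3 i.isLt
  · exact n2_lt hr hR he hu hum hh1 hh2 hh3 i.isLt
  · exact n3_lt hr hR he hu hum hh1 hh2 hh3 i.isLt

lemma MF_lt : ∀ x : Fin 2 ⊕ (Fin h₁ ⊕ Fin h₂ ⊕ Fin h₃), MF p P r R e u x < 4*(m+1) := by
  rintro (i | i | i | i) <;> simp only [MF]
  · exact ms_lt hr hR he hu hum hh1 hh2 hh3 i.isLt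
  · exact m1_lt hr hR he hu hum hh1 hh2 hh3 i.isLt
  · exact n2_lt hr hR he hu hum hh1 hh2 hh3 i.isLt
  · exact m3_lt hr hR he hu hum hh1 hh2 hh3 i.isLt

end Main

lemma catLabel_psi (k p P r R e u r' R' : ℕ) {h₁ h₂ h₃ : ℕ}
    (hr : r' ≤ 1) (hR : R' ≤ 1) (hh1 : h₁ = 4*p + 2*r') (hh3 : h₃ = 4*P + 2*R') :
    catLabel (fun x : Fin 3 ⊕ (Fin h₁ ⊕ Fin h₂ ⊕ Fin h₃) => psi k (NF p P r R e u x)) =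
      fun x => psi k (MF p P r R e u x) := by
  funext x
  rcases x with i | (i | i | i)
  · rcases i with ⟨iv, hiv⟩
    interval_cases iv
    · show psi k 1 + psi k 0 = psi k 1
      rw [psi_zero, add_zero]
    · show psi k 0 + psi k 2 = psi k 2
      rw [psi_zero, zero_add]
  · show psi k 1 + psi k (N1 p P R i.val) = psi k (M1 p P R i.val)
    rw [psi_one_add]
    exact congrArg (psi k) (M1_eq p P R r' i.val hr (hh1 ▸ i.isLt))
  · show psi k 0 + psi k (N2 p P r e u i.val) = psi k (N2 p P r e u i.val)
    rw [psi_zero, zero_add]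
  · show psi k 2 + psi k (N3 p P r i.val) = psi k (M3 p P r i.val)
    rw [psi_two_add]
    exact congrArg (psi k) (M3_eq p P r R' i.val hR (hh3 ▸ i.isLt))

lemma sufficiency (k h₁ h₂ h₃ : ℕ) (hk : 2 ≤ k) (horder : h₁ + h₂ + h₃ + 3 = 2 ^ k)
    (he1 : Even h₁) (he3 : Even h₃) (ho2 : Odd h₂) :
    IsRainbowCat h₁ h₂ h₃ (Fin k → ZMod 2) := by
  have hone : 1 ≤ 2^(k-2) := Nat.one_le_two_pow
  have hpow : 4 * (2^(k-2) - 1 + 1) = 2^k := by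
    have : (2:ℕ)^k = 2^2 * 2^(k-2) := by rw [← pow_add]; congr 1; omega
    omega
  set m := 2^(k-2) - 1 with hm
  obtain ⟨s, hs⟩ := he1
  obtain ⟨t, ht⟩ := he3
  obtain ⟨w, hw⟩ := ho2
  obtain ⟨p, r, hr, hh1⟩ : ∃ p r, r ≤ 1 ∧ h₁ = 4*p + 2*r := ⟨h₁/4, h₁/2 % 2, by omega, by omega⟩
  obtain ⟨P, R, hR, hh3⟩ : ∃ P R, R ≤ 1 ∧ h₃ = 4*P + 2*R := ⟨h₃/4, h₃/2 % 2, by omega, by omega⟩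
  set e := (r + R) % 2 with he
  set u := p + P + (r + R + 1)/2 with hu
  have hum : u ≤ m := by omega
  have hh2 : h₂ = 1 + 2*e + 4*(m - u) := by omega
  have hNb : ∀ x, NF p P r R e u (h₁ := h₁) (h₂ := h₂) (h₃ := h₃) x < 2^k := by
    intro x; have := NF_lt hr hR he hu hum hh1 hh2 hh3 x; omega
  have hMb : ∀ x, MF p P r R e u (h₁ := h₁) (h₂ := h₂) (h₃ := h₃) x < 2^k := by
    intro x; have := MF_lt hr hR he hu hum hh1 hh2 hh3 x; omega
  refine ⟨fun x => psi k (NF p P r R e u x), ?_, ?_⟩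
  · rw [Fintype.bijective_iff_injective_and_card]
    refine ⟨fun x y hxy => NF_inj hr hR he hu hum hh1 hh2 hh3 x y
      (psi_injOn (hNb x) (hNb y) hxy), ?_⟩
    simp only [Fintype.card_sum, Fintype.card_fin, Fintype.card_fun, ZMod.card]
    omega
  · rw [catLabel_psi k p P r R e u r R hr hR hh1 hh3]
    intro x y hxy
    exact MF_inj hr hR he hu hum hh1 hh2 hh3 x y (psi_injOn (hMb x) (hMb y) hxy)

lemma necessity (k h₁ h₂ h₃ : ℕ) (hk : 2 ≤ k)
    (horder : h₁ + h₂ + h₃ + 3 = 2 ^ k)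
    (H : IsRainbowCat h₁ h₂ h₃ (Fin k → ZMod 2)) :
    Even h₁ ∧ Even h₃ ∧ Odd h₂ := by
  obtain ⟨f, hbij, hinj⟩ := H
  set F0 := f (.inl 0) with hF0
  set F1 := f (.inl 1) with hF1
  set F2 := f (.inl 2) with hF2
  set S1 := ∑ j : Fin h₁, f (.inr (.inl j)) with hS1
  set S2 := ∑ j : Fin h₂, f (.inr (.inr (.inl j))) with hS2
  set S3 := ∑ j : Fin h₃, f (.inr (.inr (.inr j))) with hS3
  -- vertex sum
  have hvsum : F0 + F1 + F2 + (S1 + S2 + S3) = 0 := by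
    have := Fintype.sum_bijective f hbij f id (fun x => rfl)
    simp only [id] at this
    rw [sum_univ_zero k hk] at this
    rw [Fintype.sum_sum_type, Fintype.sum_sum_type, Fintype.sum_sum_type,
        Fin.sum_univ_three] at this
    rw [← this]
    abel
  -- edge labels are nonzero
  have hnz : ∀ e, catLabel f e ≠ 0 := by
    intro e he
    rcases e with i | (i | i | i)
    · exact (Fin.castSucc_lt_succ (i := i)).ne (Sum.inl.inj (hbij.injective (char2' he)))
    · exact Sum.inl_ne_inr (hbij.injective (char2' he))
    · exact Sum.inl_ne_inr (hbij.injective (char2' he))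
    · exact Sum.inl_ne_inr (hbij.injective (char2' he))
  -- edge sum is zero
  have hesum : ∑ e : Fin 2 ⊕ (Fin h₁ ⊕ Fin h₂ ⊕ Fin h₃), catLabel f e = 0 := by
    have himg : Finset.image (catLabel f) Finset.univ = Finset.univ.erase (0 : Fin k → ZMod 2) := by
      apply Finset.eq_of_subset_of_card_le
      · intro x hx
        rw [Finset.mem_image] at hx
        obtain ⟨e, _, rfl⟩ := hx
        exact Finset.mem_erase.2 ⟨hnz e, Finset.mem_univ _⟩
      · rw [Finset.card_erase_of_mem (Finset.mem_univ _), Finset.card_image_of_injective _ hinj]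
        simp only [Finset.card_univ]
        rw [Fintype.card_sum, Fintype.card_sum, Fintype.card_sum]
        simp only [Fintype.card_fin]
        rw [Fintype.card_fun]
        simp only [ZMod.card, Fintype.card_fin]
        omega
    calc ∑ e : Fin 2 ⊕ (Fin h₁ ⊕ Fin h₂ ⊕ Fin h₃), catLabel f e
        = ∑ x ∈ Finset.image (catLabel f) Finset.univ, x := by
          rw [Finset.sum_image (fun x _ y _ h => hinj h)]
      _ = ∑ x ∈ Finset.univ.erase (0 : Fin k → ZMod 2), x := by rw [himg]
      _ = ∑ x : Fin k → ZMod 2, x := Finset.sum_erase _ rfl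
      _ = 0 := sum_univ_zero k hk
  -- expand edge sum
  have hesum2 : F0 + F1 + (F1 + F2) + (h₁ • F0 + S1) + (h₂ • F1 + S2) + (h₃ • F2 + S3) = 0 := by
    rw [← hesum]
    rw [Fintype.sum_sum_type, Fintype.sum_sum_type, Fintype.sum_sum_type, Fin.sum_univ_two]
    simp only [catLabel, Finset.sum_add_distrib, Finset.sum_const, Finset.card_univ,
      Fintype.card_fin, Fin.castSucc_zero, Fin.succ_zero_eq_one, Fin.castSucc_one,
      Fin.succ_one_eq_two]
    abel
  have hpar : (h₁ + h₂ + h₃) % 2 = 1 := by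
    have h2k : 2 ^ k = 2 * 2 ^ (k-1) := by
      rw [← pow_succ']
      congr 1
      omega
    omega
  have e1 := hesum2
  rw [nsmul_mod h₁, nsmul_mod h₂, nsmul_mod h₃] at e1
  have e2 := hvsum
  rcases Nat.mod_two_eq_zero_or_one h₁ with c1 | c1 <;>
    rcases Nat.mod_two_eq_zero_or_one h₂ with c2 | c2 <;>
      rcases Nat.mod_two_eq_zero_or_one h₃ with c3 | c3 <;>
        rw [c1, c2, c3] at e1 <;>
        simp only [zero_smul, one_smul, zero_add, add_zero] at e1
  -- (0,0,0)
  · exfalso; omega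
  -- (0,0,1): F1 + F2 = 0
  · exfalso
    have hcon : F1 + F2 = 0 := by
      linear_combination e1 + e2 - char2 F0 - char2 F1 - char2 F2 - char2 S1 - char2 S2 - char2 S3
    have := Sum.inl.inj (hbij.injective (char2' hcon))
    exact absurd this (by decide)
  -- (0,1,0): good case
  · exact ⟨Nat.even_iff.2 c1, Nat.even_iff.2 c3, Nat.odd_iff.2 c2⟩
  -- (0,1,1)
  · exfalso; omega
  -- (1,0,0): F0 + F1 = 0
  · exfalso
    have hcon : F0 + F1 = 0 := by
      linear_combination e1 + e2 - char2 F0 - char2 F1 - char2 F2 - char2 S1 - char2 S2 - char2 S3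
    have := Sum.inl.inj (hbij.injective (char2' hcon))
    exact absurd this (by decide)
  -- (1,0,1)
  · exfalso; omega
  -- (1,1,0)
  · exfalso; omega
  -- (1,1,1): F0 + F2 = 0
  · exfalso
    have hcon : F0 + F2 = 0 := by
      linear_combination e1 + e2 - char2 F0 - 2 * char2 F1 - char2 F2 - char2 S1 - char2 S2 - char2 S3
    have := Sum.inl.inj (hbij.injective (char2' hcon))
    exact absurd this (by decide)

theorem stmt3 (k : ℕ) (hk : 2 ≤ k) (h₁ h₂ h₃ : ℕ)
    (horder : h₁ + h₂ + h₃ + 3 = 2 ^ k) :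
    IsRainbowCat h₁ h₂ h₃ (Fin k → ZMod 2) ↔ Even h₁ ∧ Even h₃ ∧ Odd h₂ :=
  ⟨necessity k h₁ h₂ h₃ hk horder,
   fun ⟨a, b, c⟩ => sufficiency k h₁ h₂ h₃ hk horder a b c⟩
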